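/- Let γ : ℝ → ℝ be 1-periodic with ‖γ‖_∞ ≤ c'd and suppose ρ ∫₀¹ γ(z)² dz = 1. If h is a 1-periodic density with bounded derivative and |γ(z)| ≤ c''d³/|z| for z ∈ [cd, 1/2] (and symmetrically near 1), then |ρ∫₀¹ γ(x−z)² h(z) dz − h(x)| → 0 uniformly in x as d → 0, with ρ ≍ d^{−3}. -/

import Mathlib

set_option maxHeartbeats 1000000

open Real Filter intervalIntegral

private lemma aux_mono_set {g : ℝ → ℝ} (hg : IntervalIntegrable g MeasureTheory.volume 0 1)
    {a b : ℝ} (ha : 0 ≤ a) (hab : a ≤ b) (hb : b ≤ 1) :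
    IntervalIntegrable g MeasureTheory.volume a b :=
  hg.mono_set (by rw [Set.uIcc_of_le hab, Set.uIcc_of_le zero_le_one]
                  exact Set.Icc_subset_Icc ha hb)

/-- Variance identification in the fluctuation theorem: for particle displacement
functions `γ_d` with `‖γ_d‖_∞ ≤ c'd`, normalization `ρ(d) ∫₀¹ γ_d² = 1`,
`ρ(d) ≍ d⁻³`, and decay `|γ_d(z)| ≤ c''d³/|z|` away from `0` (and symmetrically
near `1`), one has `ρ(d) ∫₀¹ γ_d(x-z)² h(z) dz → h(x)` uniformly in `x` as `d → 0`,
for any 1-periodic density `h` with bounded derivative. -/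
theorem variance_identification
    (γ : ℝ → ℝ → ℝ) (ρ : ℝ → ℝ) (c c' c'' c₁ c₂ : ℝ)
    (hc : 0 < c) (hc' : 0 < c') (hc'' : 0 < c'') (hc₁ : 0 < c₁) (hc₂ : 0 < c₂)
    (hγper : ∀ d > (0:ℝ), Function.Periodic (γ d) 1)
    (hγbd : ∀ d > (0:ℝ), ∀ z, |γ d z| ≤ c' * d)
    (hnorm : ∀ d > (0:ℝ), ρ d * ∫ z in (0:ℝ)..1, (γ d z) ^ 2 = 1)
    (hρ : ∀ d > (0:ℝ), c₁ * d ^ (-3 : ℤ) ≤ ρ d ∧ ρ d ≤ c₂ * d ^ (-3 : ℤ))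
    (hdecay : ∀ d > (0:ℝ), ∀ z ∈ Set.Icc (c * d) (1 / 2 : ℝ),
      |γ d z| ≤ c'' * d ^ 3 / |z|)
    (hdecay' : ∀ d > (0:ℝ), ∀ z ∈ Set.Icc (1 / 2 : ℝ) (1 - c * d),
      |γ d z| ≤ c'' * d ^ 3 / |1 - z|)
    (h : ℝ → ℝ) (hper : Function.Periodic h 1) (hnn : ∀ x, 0 ≤ h x)
    (hdens : ∫ x in (0:ℝ)..1, h x = 1)
    (hdiff : Differentiable ℝ h) (Ch' : ℝ) (hh'bd : ∀ x, |deriv h x| ≤ Ch') :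
    TendstoUniformly
      (fun d x => ρ d * ∫ z in (0:ℝ)..1, (γ d (x - z)) ^ 2 * h z)
      h (nhdsWithin 0 (Set.Ioi 0)) := by
  have hCh0 : 0 ≤ Ch' := le_trans (abs_nonneg _) (hh'bd 0)
  have hcont : Continuous h := hdiff.continuous
  -- Lipschitz bound for h
  have hlip : ∀ a b : ℝ, |h a - h b| ≤ Ch' * |a - b| := by
    have hl := lipschitzWith_of_nnnorm_deriv_le (𝕜 := ℝ) hdiff (C := Ch'.toNNReal)
      (fun x => by rw [← NNReal.coe_le_coe, coe_nnnorm, Real.coe_toNNReal _ hCh0]; simpa [Real.norm_eq_abs] using hh'bd x)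
    intro a b
    have := hl.dist_le_mul a b
    rw [Real.coe_toNNReal _ hCh0] at this
    simpa [Real.dist_eq] using this
  -- Key uniform estimate for small d
  have key : ∀ d : ℝ, 0 < d → c * d ≤ 1/2 → ∀ x : ℝ,
      |ρ d * (∫ z in (0:ℝ)..1, (γ d (x - z)) ^ 2 * h z) - h x|
        ≤ 2*Ch'*(c*d) + c₂*Ch'*c''^2/c*d^2 := by
    intro d hd hcd x
    obtain ⟨hρ1, hρ2⟩ := hρ d hd
    have hdz : d ^ (-3:ℤ) = (d^3)⁻¹ := by rw [zpow_neg]; norm_cast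
    have hr : 0 < ρ d := lt_of_lt_of_le (by rw [hdz]; positivity) hρ1
    have hcd0 : 0 ≤ c * d := le_of_lt (by positivity)
    have hcd1 : c * d ≤ 1 := hcd.trans (by norm_num)
    have hhalf : (1/2:ℝ) ≤ 1 - c*d := by linarith
    have h1cd1 : 1 - c*d ≤ 1 := by linarith
    -- integrability of γ²
    have hfint : IntervalIntegrable (fun z => (γ d z)^2) MeasureTheory.volume 0 1 := by
      by_contra hni
      have hn := hnorm d hd
      rw [intervalIntegral.integral_undef hni, mul_zero] at hn
      exact one_ne_zero hn.symm
    have hfper : Function.Periodic (fun z => (γ d z)^2) 1 := fun z => by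
      simp only [hγper d hd z]
    have hint01 : ∫ z in (0:ℝ)..1, (γ d z)^2 = (ρ d)⁻¹ :=
      (inv_eq_of_mul_eq_one_right (hnorm d hd)).symm
    -- periodic shift identity
    have hsub : ∀ g : ℝ → ℝ, Function.Periodic g 1 →
        ∫ z in (0:ℝ)..1, g (x - z) = ∫ z in (0:ℝ)..1, g z := by
      intro g hg
      rw [intervalIntegral.integral_comp_sub_left g x]
      simpa using hg.intervalIntegral_add_eq (x-1) 0
    have hφper : Function.Periodic (fun u => (γ d u)^2 * h (x - u)) 1 := by
      intro u
      simp only [hγper d hd u]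
      congr 1
      have : x - (u+1) = (x - u) - 1 := by ring
      rw [this, hper.sub_eq]
    have hA : ∫ z in (0:ℝ)..1, (γ d (x - z))^2 * h z
        = ∫ v in (0:ℝ)..1, (γ d v)^2 * h (x - v) := by
      have e1 : ∫ z in (0:ℝ)..1, (γ d (x - z))^2 * h z
          = ∫ z in (0:ℝ)..1, (fun u => (γ d u)^2 * h (x - u)) (x - z) := by
        apply intervalIntegral.integral_congr
        intro z _
        simp [sub_sub_cancel]
      rw [e1, hsub _ hφper]
    have hB : ∫ z in (0:ℝ)..1, (γ d (x - z))^2 = (ρ d)⁻¹ := by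
      rw [hsub _ hfper, hint01]
    have hφint : IntervalIntegrable (fun v => (γ d v)^2 * h (x - v)) MeasureTheory.volume 0 1 :=
      hfint.mul_continuousOn ((hcont.comp (continuous_const.sub continuous_id)).continuousOn)
    have hGint : IntervalIntegrable (fun v => (γ d v)^2 * (h (x - v) - h x))
        MeasureTheory.volume 0 1 :=
      hfint.mul_continuousOn
        (((hcont.comp (continuous_const.sub continuous_id)).sub continuous_const).continuousOn)
    -- rewrite the difference
    have hEq : ρ d * (∫ z in (0:ℝ)..1, (γ d (x - z)) ^ 2 * h z) - h x
        = ρ d * ∫ v in (0:ℝ)..1, (γ d v)^2 * (h (x - v) - h x) := by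
      have h1 : ∫ v in (0:ℝ)..1, (γ d v)^2 * (h (x - v) - h x)
          = (∫ v in (0:ℝ)..1, (γ d v)^2 * h (x - v))
            - (∫ v in (0:ℝ)..1, (γ d v)^2 * h x) := by
        rw [← intervalIntegral.integral_sub hφint (hfint.mul_const _)]
        apply intervalIntegral.integral_congr
        intro v _; ring
      have h2 : ∫ v in (0:ℝ)..1, (γ d v)^2 * h x = (ρ d)⁻¹ * h x := by
        rw [intervalIntegral.integral_mul_const, hint01]
      rw [hA, h1, h2, mul_sub]
      have : ρ d * ((ρ d)⁻¹ * h x) = h x := by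
        field_simp
      rw [this]
    rw [hEq, abs_mul, abs_of_pos hr]
    -- bound the integral by the integral of the absolute value
    set g : ℝ → ℝ := fun v => |(γ d v)^2 * (h (x - v) - h x)| with hgdef
    have hgint : IntervalIntegrable g MeasureTheory.volume 0 1 := hGint.abs
    have habs : |∫ v in (0:ℝ)..1, (γ d v)^2 * (h (x - v) - h x)|
        ≤ ∫ v in (0:ℝ)..1, g v :=
      intervalIntegral.abs_integral_le_integral_abs zero_le_one
    -- pointwise form of g
    have hgeq : ∀ v : ℝ, g v = (γ d v)^2 * |h (x - v) - h x| := by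
      intro v
      rw [hgdef]
      simp only
      rw [abs_mul, abs_of_nonneg (sq_nonneg _)]
    -- Lipschitz-type bounds
    have hlip1 : ∀ v : ℝ, 0 ≤ v → |h (x - v) - h x| ≤ Ch' * v := by
      intro v hv
      have := hlip (x - v) x
      simpa [abs_of_nonneg hv] using this
    have hlip2 : ∀ v : ℝ, v ≤ 1 → |h (x - v) - h x| ≤ Ch' * (1 - v) := by
      intro v hv
      have hpe : h (x - v) = h ((x - v) + 1) := (hper (x - v)).symm
      have := hlip ((x - v) + 1) x
      rw [← hpe] at this
      have he : |(x - v) + 1 - x| = 1 - v := by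
        rw [abs_of_nonneg (by linarith)]; ring
      rw [he] at this
      exact this
    -- splitting
    have i1 : IntervalIntegrable g MeasureTheory.volume 0 (c*d) :=
      aux_mono_set hgint le_rfl hcd0 hcd1
    have i2 : IntervalIntegrable g MeasureTheory.volume (c*d) (1/2) :=
      aux_mono_set hgint hcd0 hcd (by norm_num)
    have i3 : IntervalIntegrable g MeasureTheory.volume (1/2) (1-c*d) :=
      aux_mono_set hgint (by norm_num) hhalf h1cd1
    have i4 : IntervalIntegrable g MeasureTheory.volume (1-c*d) 1 :=
      aux_mono_set hgint (by linarith) h1cd1 le_rfl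
    have hsplit : ∫ v in (0:ℝ)..1, g v
        = (∫ v in (0:ℝ)..(c*d), g v) + (∫ v in (c*d)..(1/2:ℝ), g v)
          + (∫ v in (1/2:ℝ)..(1-c*d), g v) + (∫ v in (1-c*d)..(1:ℝ), g v) := by
      rw [intervalIntegral.integral_add_adjacent_intervals i1 i2,
          intervalIntegral.integral_add_adjacent_intervals (i1.trans i2) i3,
          intervalIntegral.integral_add_adjacent_intervals ((i1.trans i2).trans i3) i4]
    -- piece 1
    have hf1 : IntervalIntegrable (fun z => (γ d z)^2) MeasureTheory.volume 0 (c*d) :=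
      aux_mono_set hfint le_rfl hcd0 hcd1
    have hf2 : IntervalIntegrable (fun z => (γ d z)^2) MeasureTheory.volume (c*d) 1 :=
      aux_mono_set hfint hcd0 hcd1 le_rfl
    have hf3 : IntervalIntegrable (fun z => (γ d z)^2) MeasureTheory.volume 0 (1-c*d) :=
      aux_mono_set hfint le_rfl (by linarith) h1cd1
    have hf4 : IntervalIntegrable (fun z => (γ d z)^2) MeasureTheory.volume (1-c*d) 1 :=
      aux_mono_set hfint (by linarith) h1cd1 le_rfl
    have hfle1 : ∫ v in (0:ℝ)..(c*d), (γ d v)^2 ≤ (ρ d)⁻¹ := by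
      have hadd := intervalIntegral.integral_add_adjacent_intervals hf1 hf2
      have hnn2 : 0 ≤ ∫ v in (c*d)..(1:ℝ), (γ d v)^2 :=
        intervalIntegral.integral_nonneg hcd1 (fun u _ => sq_nonneg _)
      rw [← hint01]
      linarith [hadd]
    have hfle4 : ∫ v in (1-c*d)..(1:ℝ), (γ d v)^2 ≤ (ρ d)⁻¹ := by
      have hadd := intervalIntegral.integral_add_adjacent_intervals hf3 hf4
      have hnn3 : 0 ≤ ∫ v in (0:ℝ)..(1-c*d), (γ d v)^2 :=
        intervalIntegral.integral_nonneg (by linarith) (fun u _ => sq_nonneg _)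
      rw [← hint01]
      linarith [hadd]
    have hp1 : ∫ v in (0:ℝ)..(c*d), g v ≤ Ch' * (c*d) * (ρ d)⁻¹ := by
      have step1 : ∫ v in (0:ℝ)..(c*d), g v
          ≤ ∫ v in (0:ℝ)..(c*d), Ch' * (c*d) * (γ d v)^2 := by
        apply intervalIntegral.integral_mono_on hcd0 i1 (hf1.const_mul _)
        intro v hv
        rw [hgeq v]
        calc (γ d v)^2 * |h (x - v) - h x| ≤ (γ d v)^2 * (Ch' * v) :=
              mul_le_mul_of_nonneg_left (hlip1 v hv.1) (sq_nonneg _)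
          _ = (Ch' * (γ d v)^2) * v := by ring
          _ ≤ (Ch' * (γ d v)^2) * (c*d) :=
              mul_le_mul_of_nonneg_left hv.2 (by positivity)
          _ = Ch' * (c*d) * (γ d v)^2 := by ring
      rw [intervalIntegral.integral_const_mul] at step1
      calc ∫ v in (0:ℝ)..(c*d), g v ≤ Ch' * (c*d) * ∫ v in (0:ℝ)..(c*d), (γ d v)^2 := step1
        _ ≤ Ch' * (c*d) * (ρ d)⁻¹ :=
            mul_le_mul_of_nonneg_left hfle1 (by positivity)
    have hp4 : ∫ v in (1-c*d)..(1:ℝ), g v ≤ Ch' * (c*d) * (ρ d)⁻¹ := by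
      have step1 : ∫ v in (1-c*d)..(1:ℝ), g v
          ≤ ∫ v in (1-c*d)..(1:ℝ), Ch' * (c*d) * (γ d v)^2 := by
        apply intervalIntegral.integral_mono_on h1cd1 i4 (hf4.const_mul _)
        intro v hv
        rw [hgeq v]
        calc (γ d v)^2 * |h (x - v) - h x| ≤ (γ d v)^2 * (Ch' * (1 - v)) :=
              mul_le_mul_of_nonneg_left (hlip2 v hv.2) (sq_nonneg _)
          _ = (Ch' * (γ d v)^2) * (1 - v) := by ring
          _ ≤ (Ch' * (γ d v)^2) * (c*d) :=
              mul_le_mul_of_nonneg_left (by linarith [hv.1]) (by positivity)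
          _ = Ch' * (c*d) * (γ d v)^2 := by ring
      rw [intervalIntegral.integral_const_mul] at step1
      calc ∫ v in (1-c*d)..(1:ℝ), g v
          ≤ Ch' * (c*d) * ∫ v in (1-c*d)..(1:ℝ), (γ d v)^2 := step1
        _ ≤ Ch' * (c*d) * (ρ d)⁻¹ :=
            mul_le_mul_of_nonneg_left hfle4 (by positivity)
    -- middle pieces : constant bound
    have hCb : (0:ℝ) ≤ Ch' * c''^2 * d^5 / c := by positivity
    have hp2 : ∫ v in (c*d)..(1/2:ℝ), g v ≤ (1/2) * (Ch' * c''^2 * d^5 / c) := by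
      have step1 : ∫ v in (c*d)..(1/2:ℝ), g v
          ≤ ∫ _v in (c*d)..(1/2:ℝ), (Ch' * c''^2 * d^5 / c) := by
        apply intervalIntegral.integral_mono_on hcd i2 intervalIntegrable_const
        intro v hv
        have hv0 : 0 < v := lt_of_lt_of_le (by positivity) hv.1
        have hγv := hdecay d hd v ⟨hv.1, hv.2⟩
        have hγv2 : (γ d v)^2 ≤ (c'' * d^3 / v)^2 := by
          rw [← sq_abs]
          apply pow_le_pow_left₀ (abs_nonneg _)
          rwa [abs_of_pos hv0] at hγv
        have hlipv := hlip1 v hv0.le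
        rw [hgeq v]
        have hb1 : (γ d v)^2 * |h (x - v) - h x| ≤ (c'' * d^3 / v)^2 * (Ch' * v) := by
          apply mul_le_mul hγv2 hlipv (abs_nonneg _) (by positivity)
        refine hb1.trans ?_
        have he : (c'' * d^3 / v)^2 * (Ch' * v) = Ch' * c''^2 * d^6 / v := by
          field_simp
        rw [he]
        have hle : Ch' * c''^2 * d^6 / v ≤ Ch' * c''^2 * d^6 / (c*d) :=
          div_le_div_of_nonneg_left (by positivity) (by positivity) hv.1
        refine hle.trans ?_
        have : Ch' * c''^2 * d^6 / (c*d) = Ch' * c''^2 * d^5 / c := by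
          field_simp
        rw [this]
      rw [intervalIntegral.integral_const, smul_eq_mul] at step1
      calc ∫ v in (c*d)..(1/2:ℝ), g v
          ≤ (1/2 - c*d) * (Ch' * c''^2 * d^5 / c) := step1
        _ ≤ (1/2) * (Ch' * c''^2 * d^5 / c) := by nlinarith
    have hp3 : ∫ v in (1/2:ℝ)..(1-c*d), g v ≤ (1/2) * (Ch' * c''^2 * d^5 / c) := by
      have step1 : ∫ v in (1/2:ℝ)..(1-c*d), g v
          ≤ ∫ _v in (1/2:ℝ)..(1-c*d), (Ch' * c''^2 * d^5 / c) := by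
        apply intervalIntegral.integral_mono_on hhalf i3 intervalIntegrable_const
        intro v hv
        have hv0 : 0 < 1 - v := lt_of_lt_of_le (show (0:ℝ) < c*d by positivity) (by linarith [hv.2])
        have hγv := hdecay' d hd v ⟨hv.1, hv.2⟩
        have hγv2 : (γ d v)^2 ≤ (c'' * d^3 / (1-v))^2 := by
          rw [← sq_abs]
          apply pow_le_pow_left₀ (abs_nonneg _)
          rwa [abs_of_pos hv0] at hγv
        have hlipv := hlip2 v (by linarith [hv.2])
        rw [hgeq v]
        have hb1 : (γ d v)^2 * |h (x - v) - h x| ≤ (c'' * d^3 / (1-v))^2 * (Ch' * (1-v)) := by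
          apply mul_le_mul hγv2 hlipv (abs_nonneg _) (by positivity)
        refine hb1.trans ?_
        have he : (c'' * d^3 / (1-v))^2 * (Ch' * (1-v)) = Ch' * c''^2 * d^6 / (1-v) := by
          field_simp
        rw [he]
        have hle : Ch' * c''^2 * d^6 / (1-v) ≤ Ch' * c''^2 * d^6 / (c*d) :=
          div_le_div_of_nonneg_left (by positivity) (by positivity) (by linarith [hv.2])
        refine hle.trans ?_
        have : Ch' * c''^2 * d^6 / (c*d) = Ch' * c''^2 * d^5 / c := by
          field_simp
        rw [this]
      rw [intervalIntegral.integral_const, smul_eq_mul] at step1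
      calc ∫ v in (1/2:ℝ)..(1-c*d), g v
          ≤ (1 - c*d - 1/2) * (Ch' * c''^2 * d^5 / c) := step1
        _ ≤ (1/2) * (Ch' * c''^2 * d^5 / c) := by nlinarith
    -- combine
    have htotal : ∫ v in (0:ℝ)..1, g v
        ≤ 2 * (Ch' * (c*d) * (ρ d)⁻¹) + Ch' * c''^2 * d^5 / c := by
      rw [hsplit]; linarith
    have hfinal : ρ d * ∫ v in (0:ℝ)..1, g v ≤ 2*Ch'*(c*d) + c₂*Ch'*c''^2/c*d^2 := by
      have h1 : ρ d * ∫ v in (0:ℝ)..1, g v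
          ≤ ρ d * (2 * (Ch' * (c*d) * (ρ d)⁻¹) + Ch' * c''^2 * d^5 / c) :=
        mul_le_mul_of_nonneg_left htotal hr.le
      have h2 : ρ d * (2 * (Ch' * (c*d) * (ρ d)⁻¹))
          = 2*Ch'*(c*d) := by field_simp
      have h3 : ρ d * (Ch' * c''^2 * d^5 / c) ≤ c₂ * d^(-3:ℤ) * (Ch' * c''^2 * d^5 / c) :=
        mul_le_mul_of_nonneg_right hρ2 hCb
      have h4 : c₂ * d^(-3:ℤ) * (Ch' * c''^2 * d^5 / c) = c₂*Ch'*c''^2/c*d^2 := by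
        rw [hdz]; field_simp
      calc ρ d * ∫ v in (0:ℝ)..1, g v
          ≤ ρ d * (2 * (Ch' * (c*d) * (ρ d)⁻¹)) + ρ d * (Ch' * c''^2 * d^5 / c) := by
            rw [← mul_add]; exact h1
        _ ≤ 2*Ch'*(c*d) + c₂*Ch'*c''^2/c*d^2 := by rw [h2]; rw [h4] at h3; linarith
    calc ρ d * |∫ v in (0:ℝ)..1, (γ d v)^2 * (h (x - v) - h x)|
        ≤ ρ d * ∫ v in (0:ℝ)..1, g v := mul_le_mul_of_nonneg_left habs hr.le
      _ ≤ 2*Ch'*(c*d) + c₂*Ch'*c''^2/c*d^2 := hfinal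
  -- conclude uniform convergence
  rw [Metric.tendstoUniformly_iff]
  intro ε hε
  have hM : Tendsto (fun d : ℝ => 2*Ch'*(c*d) + c₂*Ch'*c''^2/c*d^2) (nhds 0) (nhds 0) := by
    have hcont' : Continuous (fun d : ℝ => 2*Ch'*(c*d) + c₂*Ch'*c''^2/c*d^2) := by
      continuity
    have := hcont'.tendsto 0
    simpa using this
  have h1 : ∀ᶠ d in nhdsWithin (0:ℝ) (Set.Ioi 0),
      2*Ch'*(c*d) + c₂*Ch'*c''^2/c*d^2 < ε := by
    have := hM.eventually (eventually_lt_nhds hε)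
    exact this.filter_mono nhdsWithin_le_nhds
  have h2 : ∀ᶠ d in nhdsWithin (0:ℝ) (Set.Ioi 0), d ∈ Set.Ioi (0:ℝ) :=
    eventually_mem_nhdsWithin
  have h3 : ∀ᶠ d in nhdsWithin (0:ℝ) (Set.Ioi 0), d < 1/(2*c) := by
    have hpos : (0:ℝ) < 1/(2*c) := by positivity
    have : ∀ᶠ d in nhds (0:ℝ), d < 1/(2*c) :=
      Filter.eventually_of_mem (Iio_mem_nhds hpos) (fun d hd => hd)
    exact this.filter_mono nhdsWithin_le_nhds
  filter_upwards [h1, h2, h3] with d hMd hdpos hdlt x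
  have hcdh : c * d ≤ 1/2 := by
    rw [lt_div_iff₀ (by positivity)] at hdlt
    nlinarith
  have hk := key d hdpos hcdh x
  rw [Real.dist_eq, abs_sub_comm]
  exact lt_of_le_of_lt hk hMd
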